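/- Let d, κ, β₊, β₋ ∈ (0,∞). Then for every continuously differentiable function ζ : [−d,0] → ℝ, min{κπ²/(4d²), β₊β₋/κ} · ∫_{−d}^{0} |ζ(r)|² dr ≤ κ∫_{−d}^{0} |ζ′(r)|² dr + β₊|ζ(0)|² + β₋|ζ(−d)|². -/

import Mathlib

open MeasureTheory Real Set

/-- **One-dimensional coercivity of the Robin dissipation functional, case
`β₊, β₋ ∈ (0,∞)`.**  For every continuously differentiable `ζ : [-d,0] → ℝ`,
`min{κπ²/(4d²), β₊β₋/κ} ⬝ ∫_{-d}^0 |ζ|² ≤ κ ∫_{-d}^0 |ζ'|² + β₊|ζ(0)|² + β₋|ζ(-d)|²`. -/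
theorem one_dim_coercivity_robin
    (d κ βp βm : ℝ) (hd : 0 < d) (hκ : 0 < κ) (hβp : 0 < βp) (hβm : 0 < βm)
    (ζ : ℝ → ℝ) (hζ : ContDiff ℝ 1 ζ) :
    min (κ * π ^ 2 / (4 * d ^ 2)) (βp * βm / κ) * (∫ r in Ioo (-d) 0, (ζ r) ^ 2) ≤
      κ * (∫ r in Ioo (-d) 0, (deriv ζ r) ^ 2) + βp * (ζ 0) ^ 2 + βm * (ζ (-d)) ^ 2 := by
  have hπ : (0:ℝ) < π := Real.pi_pos
  set lam := min (κ * π ^ 2 / (4 * d ^ 2)) (βp * βm / κ) with hlam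
  have hlam_pos : 0 < lam := lt_min (by positivity) (by positivity)
  set α := Real.sqrt (lam / κ) with hα
  set c := Real.sqrt (lam * κ) with hc
  have hαpos : 0 < α := Real.sqrt_pos.2 (by positivity)
  have hcpos : 0 < c := Real.sqrt_pos.2 (by positivity)
  have hc2 : c ^ 2 = lam * κ := Real.sq_sqrt (by positivity)
  have hα2 : α ^ 2 = lam / κ := Real.sq_sqrt (by positivity)
  have hcκα : c = κ * α := by
    rw [hα, hc, ← Real.sqrt_sq hκ.le, ← Real.sqrt_mul (by positivity)]
    congr 1
    field_simp
    exact Real.sq_sqrt (by positivity)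
  have hcα : c * α = lam := by
    rw [hcκα]
    have : (κ * α) * α = κ * α ^ 2 := by ring
    rw [this, hα2]
    field_simp
  -- α * d ≤ π / 2
  have hαd : α * d ≤ π / 2 := by
    have h1 : α ^ 2 ≤ π ^ 2 / (4 * d ^ 2) := by
      rw [hα2]
      have : lam ≤ κ * π ^ 2 / (4 * d ^ 2) := min_le_left _ _
      rw [div_le_div_iff₀ hκ (by positivity)]
      calc lam * (4 * d ^ 2) ≤ (κ * π ^ 2 / (4 * d ^ 2)) * (4 * d ^ 2) := by
            apply mul_le_mul_of_nonneg_right this (by positivity)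
        _ = π ^ 2 * κ := by field_simp
    have h1' : α ^ 2 * (4 * d ^ 2) ≤ π ^ 2 := by
      calc α ^ 2 * (4 * d ^ 2) ≤ (π ^ 2 / (4 * d ^ 2)) * (4 * d ^ 2) :=
            mul_le_mul_of_nonneg_right h1 (by positivity)
        _ = π ^ 2 := by field_simp
    nlinarith [mul_pos hαpos hd, hπ]
  -- c² ≤ βp * βm
  have hc2le : c ^ 2 ≤ βp * βm := by
    rw [hc2]
    have : lam ≤ βp * βm / κ := min_le_right _ _
    calc lam * κ ≤ (βp * βm / κ) * κ := mul_le_mul_of_nonneg_right this hκ.le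
      _ = βp * βm := by field_simp
  set θ₁ := min (α * d) (Real.arctan (βp / c)) with hθ₁
  set θ₂ := α * d - θ₁ with hθ₂
  have harctan_pos : ∀ x : ℝ, 0 < x → 0 < Real.arctan x := by
    intro x hx
    have := Real.arctan_strictMono hx
    rwa [Real.arctan_zero] at this
  have hθ₁pos : 0 < θ₁ := lt_min (by positivity) (harctan_pos _ (by positivity))
  have hθ₁lt : θ₁ < π / 2 := (min_le_right _ _).trans_lt (Real.arctan_lt_pi_div_two _)
  have hθ₂nonneg : 0 ≤ θ₂ := sub_nonneg.2 (min_le_left _ _)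
  have hθ₂le : θ₂ ≤ Real.arctan (βm / c) := by
    rcases le_total (α * d) (Real.arctan (βp / c)) with h | h
    · have : θ₁ = α * d := min_eq_left h
      rw [hθ₂, this]
      simp only [sub_self]
      exact (harctan_pos _ (by positivity)).le
    · have hθ₁eq : θ₁ = Real.arctan (βp / c) := min_eq_right h
      have h1 : θ₂ ≤ π / 2 - Real.arctan (βp / c) := by
        rw [hθ₂, hθ₁eq]
        linarith
      have h2 : π / 2 - Real.arctan (βp / c) = Real.arctan (c / βp) := by
        rw [← Real.arctan_inv_of_pos (by positivity : (0:ℝ) < βp / c), inv_div]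
      have h3 : Real.arctan (c / βp) ≤ Real.arctan (βm / c) := by
        apply Real.arctan_strictMono.monotone
        rw [div_le_div_iff₀ hβp hcpos]
        nlinarith
      linarith
  have hθ₂lt : θ₂ < π / 2 := hθ₂le.trans_lt (Real.arctan_lt_pi_div_two _)
  have htan_mono : ∀ x y : ℝ, x ∈ Ioo (-(π/2)) (π/2) → y ∈ Ioo (-(π/2)) (π/2) → x ≤ y →
      Real.tan x ≤ Real.tan y := fun x y hx hy hxy =>
    Real.strictMonoOn_tan.monotoneOn hx hy hxy
  have htanθ₁ : Real.tan θ₁ ≤ βp / c := by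
    have := htan_mono θ₁ (Real.arctan (βp / c)) ⟨by linarith, hθ₁lt⟩
      (Real.arctan_mem_Ioo _) (min_le_right _ _)
    rwa [Real.tan_arctan] at this
  have htanθ₂ : Real.tan θ₂ ≤ βm / c := by
    have := htan_mono θ₂ (Real.arctan (βm / c)) ⟨by linarith, hθ₂lt⟩
      (Real.arctan_mem_Ioo _) hθ₂le
    rwa [Real.tan_arctan] at this
  -- the auxiliary function
  set w : ℝ → ℝ := fun r => c * Real.tan (α * r + θ₁) with hw
  have harg : ∀ r ∈ Icc (-d) 0, α * r + θ₁ ∈ Ioo (-(π/2)) (π/2) := by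
    intro r hr
    constructor
    · have : α * (-d) ≤ α * r := mul_le_mul_of_nonneg_left hr.1 hαpos.le
      have h2 : -θ₂ ≤ α * r + θ₁ := by rw [hθ₂]; linarith
      linarith
    · have : α * r ≤ α * 0 := mul_le_mul_of_nonneg_left hr.2 hαpos.le
      simp only [mul_zero] at this
      linarith
  have hcos : ∀ r ∈ Icc (-d) 0, 0 < Real.cos (α * r + θ₁) := fun r hr =>
    Real.cos_pos_of_mem_Ioo (harg r hr)
  have hζd : Differentiable ℝ ζ := hζ.differentiable one_ne_zero
  have hζ'cont : Continuous (deriv ζ) := hζ.continuous_deriv le_rfl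
  -- derivative of w
  have hwderiv : ∀ r ∈ Icc (-d) 0,
      HasDerivAt w (c * α * (1 / Real.cos (α * r + θ₁) ^ 2)) r := by
    intro r hr
    have h1 : HasDerivAt (fun r : ℝ => α * r + θ₁) α r := by
      simpa using ((hasDerivAt_id r).const_mul α).add_const θ₁
    have h2 : HasDerivAt Real.tan (1 / Real.cos (α * r + θ₁) ^ 2) (α * r + θ₁) :=
      Real.hasDerivAt_tan (hcos r hr).ne'
    have h3 := (h2.comp r h1).const_mul c
    refine h3.congr_deriv ?_
    ring
  -- definitions for FTC
  set g : ℝ → ℝ := fun r =>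
    c * α * (1 / Real.cos (α * r + θ₁) ^ 2) * ζ r ^ 2 +
      w r * (2 * ζ r * deriv ζ r) with hg
  set F : ℝ → ℝ := fun r => w r * ζ r ^ 2 with hF
  have hFderiv : ∀ r ∈ Icc (-d) 0, HasDerivAt F (g r) r := by
    intro r hr
    have hz : HasDerivAt (fun r => ζ r ^ 2) (2 * ζ r * deriv ζ r) r := by
      have := ((hζd r).hasDerivAt).fun_pow 2
      refine this.congr_deriv ?_
      ring
    exact (hwderiv r hr).mul hz
  have hdneg : -d ≤ (0:ℝ) := by linarith
  have huIcc : uIcc (-d) (0:ℝ) = Icc (-d) 0 := uIcc_of_le hdneg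
  -- continuity of w on Icc
  have hwcont : ContinuousOn w (Icc (-d) 0) := by
    intro r hr
    exact ((hwderiv r hr).continuousAt).continuousWithinAt
  have hcoscont : ContinuousOn (fun r => c * α * (1 / Real.cos (α * r + θ₁) ^ 2)) (Icc (-d) 0) := by
    apply ContinuousOn.mul continuousOn_const
    apply ContinuousOn.div continuousOn_const
    · exact ((Real.continuous_cos.comp ((continuous_const.mul continuous_id).add
        continuous_const)).pow 2).continuousOn
    · intro r hr
      exact pow_ne_zero 2 (hcos r hr).ne'
  have hgcont : ContinuousOn g (Icc (-d) 0) := by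
    apply ContinuousOn.add
    · exact hcoscont.mul ((hζ.continuous.pow 2).continuousOn)
    · exact hwcont.mul (((continuous_const.mul hζ.continuous).mul hζ'cont).continuousOn)
  have hgint : IntervalIntegrable g volume (-d) 0 := by
    apply ContinuousOn.intervalIntegrable
    rwa [huIcc]
  -- FTC
  have hFTC : ∫ r in (-d)..0, g r = F 0 - F (-d) := by
    apply intervalIntegral.integral_eq_sub_of_hasDerivAt
    · intro r hr
      exact hFderiv r (huIcc ▸ hr)
    · exact hgint
  -- pointwise inequality
  have hpt : ∀ r ∈ Icc (-d) 0, lam * ζ r ^ 2 ≤ κ * (deriv ζ r) ^ 2 + g r := by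
    intro r hr
    have hcosr := hcos r hr
    have htansq : 1 / Real.cos (α * r + θ₁) ^ 2 = 1 + Real.tan (α * r + θ₁) ^ 2 := by
      rw [← Real.inv_one_add_tan_sq hcosr.ne', one_div, inv_inv]
    set t := Real.tan (α * r + θ₁) with ht
    have hgr : g r = c * α * (1 + t ^ 2) * ζ r ^ 2 + c * t * (2 * ζ r * deriv ζ r) := by
      rw [hg]
      simp only
      rw [htansq, hw]
    rw [hgr]
    have key : κ * (deriv ζ r) ^ 2 + c * α * (1 + t ^ 2) * ζ r ^ 2 +
        c * t * (2 * ζ r * deriv ζ r) =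
        lam * ζ r ^ 2 + (κ * deriv ζ r + c * t * ζ r) ^ 2 / κ := by
      rw [← hcα, hcκα]
      field_simp
      ring
    linarith [key, div_nonneg (sq_nonneg (κ * deriv ζ r + c * t * ζ r)) hκ.le]
  -- integrate the pointwise inequality
  have hζ2int : IntervalIntegrable (fun r => lam * ζ r ^ 2) volume (-d) 0 :=
    (continuous_const.mul (hζ.continuous.pow 2)).intervalIntegrable _ _
  have hζ'2int : IntervalIntegrable (fun r => κ * (deriv ζ r) ^ 2) volume (-d) 0 :=
    (continuous_const.mul (hζ'cont.pow 2)).intervalIntegrable _ _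
  have hint : ∫ r in (-d)..0, lam * ζ r ^ 2 ≤
      ∫ r in (-d)..0, (κ * (deriv ζ r) ^ 2 + g r) := by
    apply intervalIntegral.integral_mono_on hdneg hζ2int (hζ'2int.add hgint)
    exact hpt
  have hsplit : ∫ r in (-d)..0, (κ * (deriv ζ r) ^ 2 + g r) =
      (∫ r in (-d)..0, κ * (deriv ζ r) ^ 2) + ∫ r in (-d)..0, g r :=
    intervalIntegral.integral_add hζ'2int hgint
  -- boundary values
  have hw0 : w 0 ≤ βp := by
    have : w 0 = c * Real.tan θ₁ := by rw [hw]; simp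
    rw [this]
    calc c * Real.tan θ₁ ≤ c * (βp / c) := mul_le_mul_of_nonneg_left htanθ₁ hcpos.le
      _ = βp := by field_simp
  have hwd : -βm ≤ w (-d) := by
    have harg' : α * (-d) + θ₁ = -θ₂ := by rw [hθ₂]; ring
    have : w (-d) = -(c * Real.tan θ₂) := by
      rw [hw]; simp only [harg', Real.tan_neg]; ring
    rw [this]
    have : c * Real.tan θ₂ ≤ βm := by
      calc c * Real.tan θ₂ ≤ c * (βm / c) := mul_le_mul_of_nonneg_left htanθ₂ hcpos.le
        _ = βm := by field_simp
    linarith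
  -- convert set integrals
  have hconv1 : (∫ r in Ioo (-d) 0, (ζ r) ^ 2) = ∫ r in (-d)..0, ζ r ^ 2 := by
    rw [intervalIntegral.integral_of_le hdneg, MeasureTheory.integral_Ioc_eq_integral_Ioo]
  have hconv2 : (∫ r in Ioo (-d) 0, (deriv ζ r) ^ 2) = ∫ r in (-d)..0, (deriv ζ r) ^ 2 := by
    rw [intervalIntegral.integral_of_le hdneg, MeasureTheory.integral_Ioc_eq_integral_Ioo]
  rw [hconv1, hconv2]
  have hmul1 : ∫ r in (-d)..0, lam * ζ r ^ 2 = lam * ∫ r in (-d)..0, ζ r ^ 2 :=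
    intervalIntegral.integral_const_mul _ _
  have hmul2 : ∫ r in (-d)..0, κ * (deriv ζ r) ^ 2 = κ * ∫ r in (-d)..0, (deriv ζ r) ^ 2 :=
    intervalIntegral.integral_const_mul _ _
  have hFval : F 0 - F (-d) ≤ βp * (ζ 0) ^ 2 + βm * (ζ (-d)) ^ 2 := by
    have h0 : F 0 = w 0 * ζ 0 ^ 2 := rfl
    have h1 : F (-d) = w (-d) * ζ (-d) ^ 2 := rfl
    rw [h0, h1]
    have a := mul_le_mul_of_nonneg_right hw0 (sq_nonneg (ζ 0))
    have b := mul_le_mul_of_nonneg_right hwd (sq_nonneg (ζ (-d)))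
    linarith
  calc lam * ∫ r in (-d)..0, ζ r ^ 2
      = ∫ r in (-d)..0, lam * ζ r ^ 2 := hmul1.symm
    _ ≤ ∫ r in (-d)..0, (κ * (deriv ζ r) ^ 2 + g r) := hint
    _ = (∫ r in (-d)..0, κ * (deriv ζ r) ^ 2) + ∫ r in (-d)..0, g r := hsplit
    _ = κ * (∫ r in (-d)..0, (deriv ζ r) ^ 2) + (F 0 - F (-d)) := by rw [hmul2, hFTC]
    _ ≤ κ * (∫ r in (-d)..0, (deriv ζ r) ^ 2) + (βp * (ζ 0) ^ 2 + βm * (ζ (-d)) ^ 2) := by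
        linarith
    _ = κ * (∫ r in (-d)..0, (deriv ζ r) ^ 2) + βp * (ζ 0) ^ 2 + βm * (ζ (-d)) ^ 2 := by ring
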